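/- Let R be an associative ring with identity, let L(x), Q(x) ∈ R[x] and set P(x) = L(x)·Q(x). Let d ∈ R be such that h := Q(d) is invertible in R. If h·d·h⁻¹ is a root of L(x) (i.e. L(h·d·h⁻¹) = 0), then d is a root of P(x) (i.e. P(d) = 0). -/
import Mathlib

open Polynomial

lemma units_conj_pow {R : Type*} [Ring R] (h : Rˣ) (d : R) (n : ℕ) :
    ((h : R) * d * ((h⁻¹ : Rˣ) : R)) ^ n = (h : R) * d ^ n * ((h⁻¹ : Rˣ) : R) := by
  induction n with
  | zero => simp
  | succ n ih =>
      rw [pow_succ, pow_succ, ih]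
      simp only [mul_assoc, Units.inv_mul_cancel_left, Units.inv_mul, one_mul]

lemma eval_mul_eq {R : Type*} [Ring R] (Q : Polynomial R) (d : R) (L : Polynomial R) :
    (L * Q).eval d = ∑ i ∈ L.support, L.coeff i * Q.eval d * d ^ i := by
  conv_lhs => rw [L.as_sum_support]
  rw [Finset.sum_mul, eval_finset_sum]
  refine Finset.sum_congr rfl fun i _ => ?_
  rw [← C_mul_X_pow_eq_monomial, mul_assoc, X_pow_mul, ← mul_assoc, eval_mul_X_pow,
    eval_C_mul]

/-- Lemma 1 (second part): if `P = L * Q` in `R[x]`, `h := Q(d)` is invertible and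
`h d h⁻¹` is a root of `L`, then `d` is a root of `P`. -/
theorem stmt_1 {R : Type*} [Ring R] (L Q P : Polynomial R) (hP : P = L * Q)
    (d : R) (h : Rˣ) (hh : (h : R) = Q.eval d)
    (hroot : L.eval ((h : R) * d * ((h⁻¹ : Rˣ) : R)) = 0) :
    P.eval d = 0 := by
  have key : P.eval d = L.eval ((h : R) * d * ((h⁻¹ : Rˣ) : R)) * (h : R) := by
    rw [hP, eval_mul_eq Q d L]
    conv_rhs => rw [eval_eq_sum, sum_def, Finset.sum_mul]
    refine Finset.sum_congr rfl fun i _ => ?_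
    rw [units_conj_pow, ← hh]
    simp only [mul_assoc, Units.inv_mul_cancel_left, Units.inv_mul, mul_one]
  rw [key, hroot, zero_mul]
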